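/- arXiv:math/0608580 — 5 statements merged into one kernel-verified Lean document; each statement's English description precedes it below -/
import Mathlib

section
/- Every solution of the difference equation x_{n+1} - 2x_n + x_{n-1} = -4 sin²(h/2) x_n is an exact discretization of the harmonic oscillator: x_n = x(nh) where x(t) = x_0 cos t + v_0 sin t with v_0 = (x_1 - x_0 cos h)/sin h, and x(t) satisfies ẍ = -x with x(0)=x_0, ẋ(0)=v_0. -/
open Real

theorem stmt_1 (h : ℝ) (hs : Real.sin h ≠ 0) (x : ℕ → ℝ)
    (hrec : ∀ n : ℕ, 1 ≤ n →
      x (n + 1) - 2 * x n + x (n - 1) = -(4 * Real.sin (h / 2) ^ 2) * x n)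
    (X : ℝ → ℝ)
    (hX : ∀ t : ℝ, X t = x 0 * Real.cos t +
      (x 1 - x 0 * Real.cos h) / Real.sin h * Real.sin t) :
    (∀ n : ℕ, x n = X (n * h)) ∧
    (∀ t : ℝ, deriv (deriv X) t = - X t) ∧
    X 0 = x 0 ∧
    deriv X 0 = (x 1 - x 0 * Real.cos h) / Real.sin h := by
  set B := (x 1 - x 0 * Real.cos h) / Real.sin h with hB
  have hXe : X = fun t => x 0 * Real.cos t + B * Real.sin t := funext hX
  have hcosh : Real.cos h = 1 - 2 * Real.sin (h / 2) ^ 2 := by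
    have h1 : Real.cos h = Real.cos (h / 2 + h / 2) := by norm_num
    rw [h1, Real.cos_add]
    have := Real.sin_sq_add_cos_sq (h / 2)
    nlinarith
  have H1 : ∀ t, HasDerivAt X (B * Real.cos t - x 0 * Real.sin t) t := by
    intro t; rw [hXe]
    have := ((Real.hasDerivAt_cos t).const_mul (x 0)).add
      ((Real.hasDerivAt_sin t).const_mul B)
    exact this.congr_deriv (by ring)
  have hderiv : deriv X = fun t => B * Real.cos t - x 0 * Real.sin t :=
    funext fun t => (H1 t).deriv
  have hderiv2 : ∀ t, deriv (deriv X) t = - X t := by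
    intro t
    rw [hderiv, hXe]
    have h2 : HasDerivAt (fun t => B * Real.cos t - x 0 * Real.sin t)
        (-(x 0 * Real.cos t) - B * Real.sin t) t := by
      have := ((Real.hasDerivAt_cos t).const_mul B).sub
        ((Real.hasDerivAt_sin t).const_mul (x 0))
      exact this.congr_deriv (by ring)
    rw [h2.deriv]; simp; ring
  have key : ∀ n : ℕ, x n = X (n * h) := by
    have h0 : x 0 = X (0 * h) := by rw [hXe]; simp
    have h1 : x 1 = X (1 * h) := by
      rw [hXe]; simp only [one_mul]
      rw [hB, div_mul_cancel₀ _ hs]; ring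
    intro n
    induction n using Nat.strong_induction_on with
    | _ n ih =>
      match n with
      | 0 => simpa using h0
      | 1 => simpa using h1
      | (m + 2) =>
        have hm := ih m (by omega)
        have hm1 := ih (m + 1) (by omega)
        push_cast at hm hm1
        have hr := hrec (m + 1) (by omega)
        simp only [Nat.add_sub_cancel] at hr
        have hxr : x (m + 2) = 2 * Real.cos h * x (m + 1) - x m := by
          rw [hcosh]; linarith [hr]
        rw [hxr, hm, hm1, hXe]
        simp only
        push_cast
        have e1 : ((m : ℝ) + 2) * h = ((m : ℝ) + 1) * h + h := by ring
        have e2 : (m : ℝ) * h = ((m : ℝ) + 1) * h - h := by ring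
        rw [e1, e2, Real.cos_add, Real.sin_add, Real.cos_sub, Real.sin_sub]
        ring
  refine ⟨key, hderiv2, ?_, ?_⟩
  · rw [hXe]; simp
  · rw [hderiv]; simp
end

section
/- For the discrete Kepler problem, the angular momentum L_n = α m (r⃗_n × r⃗_{n+1})/Δt_n is conserved: L_n = L_{n-1} for all n ≥ 1. -/
open Real

noncomputable def cross3 (u v : EuclideanSpace ℝ (Fin 3)) : EuclideanSpace ℝ (Fin 3) :=
  (WithLp.equiv 2 (Fin 3 → ℝ)).symm
    ![u 1 * v 2 - u 2 * v 1, u 2 * v 0 - u 0 * v 2, u 0 * v 1 - u 1 * v 0]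

theorem stmt_3 (m k α δ : ℝ) (hm : 0 < m) (hk : 0 < k) (hα : 0 < α)
    (r : ℕ → EuclideanSpace ℝ (Fin 3)) (hr : ∀ n, r n ≠ 0)
    (Δt : ℕ → ℝ) (hΔt : ∀ n, 0 < Δt n)
    (hKepler : ∀ n : ℕ, 1 ≤ n →
      (Δt n)⁻¹ • r (n + 1) + (Δt (n - 1))⁻¹ • r (n - 1) =
        (1 / Δt n + 1 / Δt (n - 1) -
          k * Δt (n - 1) / (α * m * ‖r n‖ ^ 2 * ‖r (n - 1)‖ * Real.cos δ)) • r n)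
    (L : ℕ → EuclideanSpace ℝ (Fin 3))
    (hL : ∀ n, L n = (α * m / Δt n) • cross3 (r n) (r (n + 1))) :
    ∀ n : ℕ, 1 ≤ n → L n = L (n - 1) := by
  intro n hn
  have hA := hKepler n hn
  have hcomp : ∀ i : Fin 3,
      (Δt n)⁻¹ * r (n + 1) i + (Δt (n - 1))⁻¹ * r (n - 1) i =
      (1 / Δt n + 1 / Δt (n - 1) -
        k * Δt (n - 1) / (α * m * ‖r n‖ ^ 2 * ‖r (n - 1)‖ * Real.cos δ)) * r n i := by
    intro i
    have := congrFun (congrArg (WithLp.equiv 2 (Fin 3 → ℝ)) hA) i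
    simpa using this
  have hsucc : n - 1 + 1 = n := Nat.succ_pred_eq_of_pos hn
  have h0 := hcomp 0
  have h1 := hcomp 1
  have h2 := hcomp 2
  have hne : Δt n ≠ 0 := (hΔt n).ne'
  have hne' : Δt (n - 1) ≠ 0 := (hΔt (n - 1)).ne'
  rw [hL, hL, hsucc]
  ext i
  fin_cases i <;>
    simp only [cross3, WithLp.equiv_symm_apply, WithLp.ofLp_toLp, PiLp.smul_apply, smul_eq_mul,
      Matrix.cons_val_zero, Matrix.cons_val_one, Matrix.head_cons,
      Matrix.cons_val_two, Matrix.tail_cons, Fin.zero_eta, Fin.mk_one, Fin.reduceFinMk, Fin.isValue]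
  · linear_combination (α * m) * (r n 1 * h2 - r n 2 * h1)
  · linear_combination (α * m) * (r n 2 * h0 - r n 0 * h2)
  · linear_combination (α * m) * (r n 0 * h1 - r n 1 * h0)
end

section
/- For the discrete Kepler problem with constant half-angle δ between consecutive radius vectors, the discrete energy E_n = |p⃗_n|²/(2m) - k/(α R_n) is conserved: E_n = E_{n-1}, where p⃗_n = m(r⃗_{n+1} - r⃗_n)/Δt_n and R_n = 2 r_n r_{n+1} cos δ/(r_n + r_{n+1}). -/
open Real

lemma aux_energy (m k α cd u A B C σ τ : ℝ) (hm : 0 < m) (hα : 0 < α) (hcd : cd ≠ 0)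
    (hA : 0 < A) (hB : 0 < B) (hC : 0 < C) (hσ : 0 < σ) (hτ : 0 < τ)
    (e1 : σ⁻¹ * (B * C * u) + τ⁻¹ * (A * B * u) =
      (1 / σ + 1 / τ - k * τ / (α * m * B ^ 2 * A * cd)) * B ^ 2)
    (e2 : C * τ = A * σ) :
    (m / σ) ^ 2 * (C ^ 2 + B ^ 2 - 2 * (B * C * u)) / (2 * m) -
        k / (α * (2 * B * C * cd / (B + C))) =
      (m / τ) ^ 2 * (A ^ 2 + B ^ 2 - 2 * (A * B * u)) / (2 * m) -
        k / (α * (2 * A * B * cd / (A + B))) := by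
  have hC' : C = A * σ / τ := by field_simp; linarith [e2]
  subst hC'
  have h := e1
  field_simp at h
  have e1' : (2*A^2*B*u*α*m*cd*σ) * (B^2*σ*τ^2) =
      (α*m*A*B^2*cd*(τ+σ) - k*σ*τ^2) * (B^2*σ*τ^2) := by linear_combination (B^2*σ*τ^2) * h
  have e1'' : 2*A^2*B*u*α*m*cd*σ = α*m*A*B^2*cd*(τ+σ) - k*σ*τ^2 :=
    mul_right_cancel₀ (by positivity) e1'
  have hu : u = (α*m*A*B^2*cd*(τ+σ) - k*σ*τ^2) / (2*A^2*B*α*m*cd*σ) := by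
    rw [eq_div_iff (by positivity)]
    linear_combination e1''
  subst hu
  have h1 : A * σ / τ > 0 := by positivity
  field_simp
  ring

theorem stmt_6 (m k α δ : ℝ) (hm : 0 < m) (hk : 0 < k) (hα : 0 < α)
    (hc : Real.cos δ ≠ 0)
    (r : ℕ → EuclideanSpace ℝ (Fin 3)) (hr : ∀ n, r n ≠ 0)
    (Δt : ℕ → ℝ) (hΔt : ∀ n, 0 < Δt n)
    (hKepler : ∀ n : ℕ, 1 ≤ n →
      (Δt n)⁻¹ • r (n + 1) + (Δt (n - 1))⁻¹ • r (n - 1) =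
        (1 / Δt n + 1 / Δt (n - 1) -
          k * Δt (n - 1) / (α * m * ‖r n‖ ^ 2 * ‖r (n - 1)‖ * Real.cos δ)) • r n)
    (hangle : ∀ n : ℕ, inner ℝ (r n) (r (n + 1)) = ‖r n‖ * ‖r (n + 1)‖ * Real.cos (2 * δ))
    (hident : ∀ n : ℕ, 1 ≤ n → ‖r (n + 1)‖ * Δt (n - 1) = ‖r (n - 1)‖ * Δt n)
    (p : ℕ → EuclideanSpace ℝ (Fin 3))
    (hp : ∀ n, p n = (m / Δt n) • (r (n + 1) - r n))
    (R : ℕ → ℝ)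
    (hR : ∀ n, R n = 2 * ‖r n‖ * ‖r (n + 1)‖ * Real.cos δ / (‖r n‖ + ‖r (n + 1)‖))
    (E : ℕ → ℝ)
    (hE : ∀ n, E n = ‖p n‖ ^ 2 / (2 * m) - k / (α * R n)) :
    ∀ n : ℕ, 1 ≤ n → E n = E (n - 1) := by
  intro n hn
  obtain ⟨j, rfl⟩ : ∃ j, n = j + 1 := ⟨n - 1, (Nat.succ_pred_eq_of_pos hn).symm⟩
  simp only [Nat.add_sub_cancel] at *
  set A := ‖r j‖ with hAdef
  set B := ‖r (j + 1)‖ with hBdef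
  set C := ‖r (j + 1 + 1)‖ with hCdef
  have hA : 0 < A := norm_pos_iff.mpr (hr j)
  have hB : 0 < B := norm_pos_iff.mpr (hr (j + 1))
  have hC : 0 < C := norm_pos_iff.mpr (hr (j + 1 + 1))
  have hσ := hΔt (j + 1)
  have hτ := hΔt j
  -- inner product equation from Kepler
  have hK := hKepler (j + 1) le_add_self
  simp only [Nat.add_sub_cancel] at hK
  have e1 : (Δt (j+1))⁻¹ * (B * C * Real.cos (2*δ)) + (Δt j)⁻¹ * (A * B * Real.cos (2*δ)) =
      (1 / Δt (j+1) + 1 / Δt j - k * Δt j / (α * m * B ^ 2 * A * Real.cos δ)) * B ^ 2 := by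
    have h2 := congrArg (fun v : EuclideanSpace ℝ (Fin 3) => (inner ℝ (r (j+1)) v : ℝ)) hK
    simp only [inner_add_right, real_inner_smul_right] at h2
    rw [hangle (j+1), real_inner_comm (r j) (r (j+1)), hangle j, real_inner_self_eq_norm_sq] at h2
    rw [← hAdef, ← hBdef, ← hCdef] at h2
    linarith [h2]
  have e2 : C * Δt j = A * Δt (j + 1) := by
    have := hident (j + 1) le_add_self
    simpa [Nat.add_sub_cancel] using this
  -- norm squares
  have nsq : ∀ i : ℕ, ‖r (i+1) - r i‖ ^ 2 =
      ‖r (i+1)‖ ^ 2 + ‖r i‖ ^ 2 - 2 * (‖r i‖ * ‖r (i+1)‖ * Real.cos (2*δ)) := by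
    intro i
    rw [norm_sub_sq_real, real_inner_comm, hangle i]
    ring
  have hpn : ∀ i : ℕ, ‖p i‖ ^ 2 = (m / Δt i) ^ 2 * ‖r (i+1) - r i‖ ^ 2 := by
    intro i
    rw [hp i, norm_smul, mul_pow, Real.norm_eq_abs, sq_abs]
  rw [hE (j+1), hE j, hR (j+1), hR j, hpn (j+1), hpn j, nsq (j+1), nsq j]
  rw [← hAdef, ← hBdef, ← hCdef]
  have := aux_energy m k α (Real.cos δ) (Real.cos (2*δ)) A B C (Δt (j+1)) (Δt j)
    hm hα hc hA hB hC hσ hτ e1 e2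
  linear_combination this
end

section
/- For the discrete Kepler problem, the discrete Runge–Lenz vector A⃗_n = (p⃗_n × L⃗_n)/m - k R⃗_n/R_n is conserved: A⃗_n = A⃗_{n-1}. -/
open Real

lemma cross3_apply (u v : EuclideanSpace ℝ (Fin 3)) (i : Fin 3) :
    cross3 u v i = ![u 1 * v 2 - u 2 * v 1, u 2 * v 0 - u 0 * v 2, u 0 * v 1 - u 1 * v 0] i := rfl

lemma inner3 (u v : EuclideanSpace ℝ (Fin 3)) : (inner ℝ u v : ℝ) = u 0 * v 0 + u 1 * v 1 + u 2 * v 2 := by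
  simp [PiLp.inner_apply, Fin.sum_univ_three, RCLike.inner_apply, conj_trivial] <;> ring

lemma cross3_key (x y : ℝ) (u v : EuclideanSpace ℝ (Fin 3)) :
    cross3 (x • (v - u)) (y • cross3 u v) =
      (x * y) • (((inner ℝ v v : ℝ) - (inner ℝ u v : ℝ)) • u + ((inner ℝ u u : ℝ) - (inner ℝ u v : ℝ)) • v) := by
  ext i
  fin_cases i <;>
    simp [-inner_self_eq_norm_sq_to_K, cross3_apply, inner3, PiLp.smul_apply, PiLp.sub_apply, PiLp.add_apply,
      Matrix.cons_val_zero, Matrix.cons_val_one, smul_eq_mul, Fin.sum_univ_three] <;> ring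

lemma cross3_smul_right (s : ℝ) (u v : EuclideanSpace ℝ (Fin 3)) :
    cross3 u (s • v) = s • cross3 u v := by
  ext i
  fin_cases i <;> simp [cross3_apply, PiLp.smul_apply, smul_eq_mul] <;> ring

lemma cross3_self (u : EuclideanSpace ℝ (Fin 3)) : cross3 u u = 0 := by
  ext i
  fin_cases i <;> simp [cross3_apply] <;> ring

lemma cross3_zero_right (u : EuclideanSpace ℝ (Fin 3)) : cross3 u 0 = 0 := by
  ext i
  fin_cases i <;> simp [cross3_apply]

lemma normR (u v : EuclideanSpace ℝ (Fin 3)) (cd : ℝ) (hcd : 0 < cd)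
    (hu : 0 < ‖u‖) (hv : 0 < ‖v‖)
    (hin : (inner ℝ u v : ℝ) = ‖u‖ * ‖v‖ * (2 * cd ^ 2 - 1)) :
    ‖(‖u‖ + ‖v‖)⁻¹ • (‖v‖ • u + ‖u‖ • v)‖ = 2 * ‖u‖ * ‖v‖ * cd / (‖u‖ + ‖v‖) := by
  have h2 : ‖‖v‖ • u + ‖u‖ • v‖ ^ 2 = (2 * ‖u‖ * ‖v‖ * cd) ^ 2 := by
    rw [← real_inner_self_eq_norm_sq]
    rw [real_inner_add_add_self]
    rw [real_inner_smul_left, real_inner_smul_right, real_inner_smul_left,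
      real_inner_smul_right, real_inner_smul_left, real_inner_smul_right,
      real_inner_self_eq_norm_sq, real_inner_self_eq_norm_sq, hin]
    ring
  have h3 : ‖‖v‖ • u + ‖u‖ • v‖ = 2 * ‖u‖ * ‖v‖ * cd := by
    have h4 := Real.sqrt_sq (norm_nonneg (‖v‖ • u + ‖u‖ • v))
    rw [← h4, h2, Real.sqrt_sq (by positivity)]
  rw [norm_smul, h3, Real.norm_eq_abs, abs_of_pos (by positivity), inv_mul_eq_div]


set_option maxHeartbeats 2000000 in
theorem stmt_7 (m k α δ : ℝ) (hm : 0 < m) (hk : 0 < k) (hα : 0 < α)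
    (hc : Real.cos δ ≠ 0)
    (r : ℕ → EuclideanSpace ℝ (Fin 3)) (hr : ∀ n, r n ≠ 0)
    (Δt : ℕ → ℝ) (hΔt : ∀ n, 0 < Δt n)
    (hKepler : ∀ n : ℕ, 1 ≤ n →
      (Δt n)⁻¹ • r (n + 1) + (Δt (n - 1))⁻¹ • r (n - 1) =
        (1 / Δt n + 1 / Δt (n - 1) -
          k * Δt (n - 1) / (α * m * ‖r n‖ ^ 2 * ‖r (n - 1)‖ * Real.cos δ)) • r n)
    (hangle : ∀ n : ℕ, inner ℝ (r n) (r (n + 1)) = ‖r n‖ * ‖r (n + 1)‖ * Real.cos (2 * δ))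
    (hident : ∀ n : ℕ, 1 ≤ n → ‖r (n + 1)‖ * Δt (n - 1) = ‖r (n - 1)‖ * Δt n)
    (p L R A : ℕ → EuclideanSpace ℝ (Fin 3))
    (hp : ∀ n, p n = (m / Δt n) • (r (n + 1) - r n))
    (hL : ∀ n, L n = (α * m / Δt n) • cross3 (r n) (r (n + 1)))
    (hRvec : ∀ n, R n = (‖r n‖ + ‖r (n + 1)‖)⁻¹ • (‖r (n + 1)‖ • r n + ‖r n‖ • r (n + 1)))
    (hA : ∀ n, A n = (1 / m) • cross3 (p n) (L n) - (k / ‖R n‖) • R n) :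
    ∀ n : ℕ, 1 ≤ n → A n = A (n - 1) := by
  have hrpos : ∀ j, (0:ℝ) < ‖r j‖ := fun j => norm_pos_iff.mpr (hr j)
  have hc2 : Real.cos (2*δ) = 2 * Real.cos δ ^ 2 - 1 := Real.cos_two_mul δ
  have hang : ∀ j : ℕ, (inner ℝ (r j) (r (j+1)) : ℝ) = ‖r j‖ * ‖r (j+1)‖ * (2 * Real.cos δ ^ 2 - 1) := by
    intro j; rw [hangle j, hc2]
  have hid : ∀ j : ℕ, ‖r (j+1+1)‖ * Δt j = ‖r j‖ * Δt (j+1) := by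
    intro j; have h := hident (j+1) (Nat.le_add_left 1 j); simpa using h
  have hrc : ∀ j : ℕ, ‖r (j+1+1)‖ = ‖r j‖ * Δt (j+1) / Δt j := by
    intro j
    rw [eq_div_iff (hΔt j).ne']
    exact hid j
  have hin : ∀ j : ℕ,
      (Δt (j+1))⁻¹ * (‖r (j+1)‖ * ‖r (j+1+1)‖ * (2*Real.cos δ^2 - 1))
        + (Δt j)⁻¹ * (‖r j‖ * ‖r (j+1)‖ * (2*Real.cos δ^2 - 1)) =
      (1 / Δt (j+1) + 1 / Δt j - k * Δt j / (α * m * ‖r (j+1)‖^2 * ‖r j‖ * Real.cos δ)) * ‖r (j+1)‖^2 := by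
    intro j
    have hkep := hKepler (j+1) (Nat.le_add_left 1 j)
    simp only [Nat.add_sub_cancel] at hkep
    have h := congrArg (fun w => (inner ℝ (r (j+1)) w : ℝ)) hkep
    simp only [inner_add_right, real_inner_smul_right] at h
    rw [hang (j+1), show (inner ℝ (r (j+1)) (r j) : ℝ) = inner ℝ (r j) (r (j+1)) from real_inner_comm _ _,
      hang j, real_inner_self_eq_norm_sq] at h
    linarith [h]
  have hstarP : ∀ j : ℕ, k * (Δt j)^2 * Δt (j+1) =
      α * m * ‖r j‖ * Real.cos δ *
        ((Δt j + Δt (j+1)) * ‖r (j+1)‖^2 - 2*(2*Real.cos δ^2-1) * ‖r j‖ * ‖r (j+1)‖ * Δt (j+1)) := by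
    intro j
    have h := hin j
    rw [hrc j] at h
    field_simp [(hΔt j).ne', (hΔt (j+1)).ne', (hrpos j).ne', (hrpos (j+1)).ne', hm.ne', hα.ne', hc] at h
    linear_combination h
  intro n hn
  obtain ⟨l, rfl⟩ : ∃ l, n = l + 1 := ⟨n - 1, (Nat.succ_pred_eq_of_pos hn).symm⟩
  simp only [Nat.add_sub_cancel]
  rcases hc.lt_or_gt with hneg | hpos
  · -- cos δ < 0
    have hCle : Real.cos (2*δ) ≤ 1 := Real.cos_le_one _
    rcases eq_or_lt_of_le hCle with hCeq | hClt
    · -- collinear case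
      have hcol : ∀ j : ℕ, ‖r (j+1)‖ • r j = ‖r j‖ • r (j+1) := by
        intro j
        apply inner_eq_norm_mul_iff_real.mp
        rw [hangle j, hCeq, mul_one]
      have hcj : ∀ j : ℕ, r (j+1) = (‖r (j+1)‖ / ‖r j‖) • r j := by
        intro j
        calc r (j+1) = (‖r j‖)⁻¹ • (‖r j‖ • r (j+1)) := (inv_smul_smul₀ (hrpos j).ne' _).symm
          _ = (‖r j‖)⁻¹ • (‖r (j+1)‖ • r j) := by rw [hcol j]
          _ = (‖r (j+1)‖ / ‖r j‖) • r j := by rw [smul_smul, inv_mul_eq_div]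
      have hAval : ∀ j : ℕ, A j = -((k / ‖r j‖) • r j) := by
        intro j
        have hb := hrpos j
        have hb1 := hrpos (j+1)
        have hLj : L j = 0 := by
          rw [hL j, hcj j, cross3_smul_right, cross3_self, smul_zero, smul_zero]
        have hRj : R j = (2 * ‖r (j+1)‖ / (‖r j‖ + ‖r (j+1)‖)) • r j := by
          rw [hRvec j, ← hcol j]
          match_scalars
          field_simp
          ring
        have hnormRj : ‖R j‖ = 2 * ‖r (j+1)‖ * ‖r j‖ / (‖r j‖ + ‖r (j+1)‖) := by
          have h1 : (0:ℝ) < 2 * ‖r (j+1)‖ / (‖r j‖ + ‖r (j+1)‖) :=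
            div_pos (by linarith) (by linarith)
          rw [hRj, norm_smul, Real.norm_eq_abs, abs_of_pos h1]
          ring
        rw [hA j, hLj, cross3_zero_right, smul_zero, zero_sub, hnormRj, hRj, smul_smul]
        match_scalars
        have hsum : (0:ℝ) < ‖r j‖ + ‖r (j+1)‖ := by linarith
        field_simp
      have key : (k/‖r (l+1)‖) • r (l+1) = (k/‖r l‖) • r l := by
        have h := congrArg (fun w => (k/(‖r l‖*‖r (l+1)‖)) • w) (hcol l)
        simp only [smul_smul] at h
        rw [show k/(‖r l‖*‖r (l+1)‖) * ‖r (l+1)‖ = k/‖r l‖ from by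
              field_simp [(hrpos l).ne', (hrpos (l+1)).ne'],
            show k/(‖r l‖*‖r (l+1)‖) * ‖r l‖ = k/‖r (l+1)‖ from by
              field_simp [(hrpos l).ne', (hrpos (l+1)).ne']] at h
        exact h.symm
      rw [hAval (l+1), hAval l, key]
    · -- descent contradiction
      exfalso
      have hgap : (0:ℝ) < 2 - 2*(2*Real.cos δ^2 - 1) := by
        have h1 : 2*Real.cos δ^2 - 1 < 1 := by rw [← hc2]; exact hClt
        linarith
      have hstep : ∀ j : ℕ, ‖r (j+1)‖/‖r (j+1+1)‖ ≤ ‖r j‖/‖r (j+1)‖ - (2 - 2*(2*Real.cos δ^2 - 1)) := by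
        intro j
        have ha := hrpos j
        have hb := hrpos (j+1)
        have hcc := hrpos (j+1+1)
        have hT : (Δt j + Δt (j+1)) * ‖r (j+1)‖^2 - 2*(2*Real.cos δ^2-1)*‖r j‖*‖r (j+1)‖*Δt (j+1) < 0 := by
          by_contra hT'
          push_neg at hT'
          have h1 : α*m*‖r j‖*Real.cos δ *
              ((Δt j + Δt (j+1)) * ‖r (j+1)‖^2 - 2*(2*Real.cos δ^2-1)*‖r j‖*‖r (j+1)‖*Δt (j+1)) ≤ 0 :=
            mul_nonpos_of_nonpos_of_nonneg
              (le_of_lt (mul_neg_of_pos_of_neg (mul_pos (mul_pos hα hm) ha) hneg)) hT'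
          have h2 : (0:ℝ) < k * (Δt j)^2 * Δt (j+1) := mul_pos (mul_pos hk (pow_pos (hΔt j) 2)) (hΔt (j+1))
          linarith [hstarP j]
        have hA1 := mul_lt_mul_of_pos_right (show (Δt j + Δt (j+1)) * ‖r (j+1)‖^2 <
            2*(2*Real.cos δ^2-1)*‖r j‖*‖r (j+1)‖*Δt (j+1) from by linarith) hcc
        have hA2 : (Δt j + Δt (j+1)) * ‖r (j+1)‖^2 * ‖r (j+1+1)‖ =
            ‖r j‖ * Δt (j+1) * ‖r (j+1)‖^2 + Δt (j+1) * ‖r (j+1)‖^2 * ‖r (j+1+1)‖ := by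
          linear_combination ‖r (j+1)‖^2 * hid j
        have keyP : ‖r j‖ * ‖r (j+1)‖ + ‖r (j+1)‖ * ‖r (j+1+1)‖ <
            2*(2*Real.cos δ^2-1) * ‖r j‖ * ‖r (j+1+1)‖ := by
          have h3 : ‖r j‖ * Δt (j+1) * ‖r (j+1)‖^2 + Δt (j+1) * ‖r (j+1)‖^2 * ‖r (j+1+1)‖ <
              2*(2*Real.cos δ^2-1)*‖r j‖*‖r (j+1)‖*Δt (j+1)*‖r (j+1+1)‖ := by linarith
          nlinarith [h3, mul_pos (hΔt (j+1)) hb]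
        have h5 : ‖r j‖/‖r (j+1+1)‖ + 1 < 2*(2*Real.cos δ^2-1)*‖r j‖/‖r (j+1)‖ := by
          rw [div_add' _ _ _ hcc.ne', div_lt_div_iff₀ hcc hb]
          ring_nf
          ring_nf at keyP
          linarith [keyP]
        have hmul : (‖r j‖/‖r (j+1)‖) * (‖r (j+1)‖/‖r (j+1+1)‖) = ‖r j‖/‖r (j+1+1)‖ := by
          field_simp
        have h6 : (‖r j‖/‖r (j+1)‖) * (‖r (j+1)‖/‖r (j+1+1)‖) + 1 <
            2*(2*Real.cos δ^2-1)*(‖r j‖/‖r (j+1)‖) := by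
          rw [hmul]
          calc ‖r j‖/‖r (j+1+1)‖ + 1 < 2*(2*Real.cos δ^2-1)*‖r j‖/‖r (j+1)‖ := h5
            _ = 2*(2*Real.cos δ^2-1)*(‖r j‖/‖r (j+1)‖) := by ring
        nlinarith [h6, sq_nonneg (‖r j‖/‖r (j+1)‖ - 1), div_pos ha hb, div_pos hb hcc]
      have hdesc : ∀ N : ℕ, ‖r N‖/‖r (N+1)‖ ≤ ‖r 0‖/‖r 1‖ - N*(2 - 2*(2*Real.cos δ^2 - 1)) := by
        intro N
        induction N with
        | zero => simp
        | succ M ih =>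
          have h := hstep M
          push_cast
          push_cast at ih
          linarith
      obtain ⟨N, hN⟩ := exists_nat_gt ((‖r 0‖/‖r 1‖) / (2 - 2*(2*Real.cos δ^2 - 1)))
      have h7 := hdesc N
      have h8 : (0:ℝ) < ‖r N‖/‖r (N+1)‖ := div_pos (hrpos N) (hrpos (N+1))
      have h9 : ‖r 0‖/‖r 1‖ < N*(2 - 2*(2*Real.cos δ^2 - 1)) := by
        rw [div_lt_iff₀ hgap] at hN
        linarith
      linarith
  · -- main case : 0 < cos δ
    have hσ := hΔt l
    have hτ := hΔt (l+1)
    have hb0 := hrpos l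
    have hb1 := hrpos (l+1)
    have hb2 := hrpos (l+1+1)
    have hkep := hKepler (l+1) (Nat.le_add_left 1 l)
    simp only [Nat.add_sub_cancel] at hkep
    have hcvec : r (l+1+1) = Δt (l+1) •
        ((1/Δt (l+1) + 1/Δt l - k*Δt l/(α*m*‖r (l+1)‖^2*‖r l‖*Real.cos δ)) • r (l+1)
          - (Δt l)⁻¹ • r l) := by
      rw [← eq_sub_of_add_eq hkep, smul_inv_smul₀ hτ.ne']
    have hkval : k = α * m * ‖r l‖ * Real.cos δ *
        ((Δt l + Δt (l+1)) * ‖r (l+1)‖^2 - 2*(2*Real.cos δ^2-1) * ‖r l‖ * ‖r (l+1)‖ * Δt (l+1))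
          / ((Δt l)^2 * Δt (l+1)) := by
      rw [eq_div_iff (mul_ne_zero (pow_ne_zero 2 hσ.ne') hτ.ne')]
      linear_combination hstarP l
    have hsum0 : (0:ℝ) < ‖r l‖ + ‖r (l+1)‖ := by linarith
    have hsum1 : (0:ℝ) < ‖r (l+1)‖ + ‖r l‖ * Δt (l+1) / Δt l :=
      add_pos hb1 (div_pos (mul_pos hb0 hτ) hσ)
    rw [hA (l+1), hA l, hp (l+1), hp l, hL (l+1), hL l, hRvec (l+1), hRvec l,
      cross3_key, cross3_key,
      normR (r (l+1)) (r (l+1+1)) _ hpos hb1 hb2 (hang (l+1)),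
      normR (r l) (r (l+1)) _ hpos hb0 hb1 (hang l)]
    simp only [real_inner_self_eq_norm_sq]
    rw [hang (l+1), hang l, hrc l, hcvec, hkval]
    match_scalars <;>
    · field_simp [hm.ne', hα.ne', hσ.ne', hτ.ne', hb0.ne', hb1.ne', hpos.ne', hsum0.ne', hsum1.ne']
      ring
end

section
/- Substituting the bisection relation r⃗_{n+1}/r_{n+1} + r⃗_{n-1}/r_{n-1} = 2 cos δ · r⃗_n/r_n and the identity r_{n+1} Δt_{n-1} = r_{n-1} Δt_n into the discrete Kepler equation yields the explicit time-step recursion Δt_n = Δt_{n-1} / (2 cos δ · (r_{n-1}/r_n) - 1 + k r_{n-1} (Δt_{n-1})² / (m α cos δ · r_n² r_{n-1}²)). -/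
open Real

theorem stmt_11 (m k α δ : ℝ) (hm : 0 < m) (hk : 0 < k) (hα : 0 < α)
    (hc : Real.cos δ ≠ 0)
    (a b c : EuclideanSpace ℝ (Fin 3)) (ha : a ≠ 0) (hb : b ≠ 0) (hcne : c ≠ 0)
    (Δtm Δtn : ℝ) (hΔtm : 0 < Δtm) (hΔtn : 0 < Δtn)
    (hKepler : Δtn⁻¹ • c + Δtm⁻¹ • a =
      (1 / Δtn + 1 / Δtm - k * Δtm / (α * m * ‖b‖ ^ 2 * ‖a‖ * Real.cos δ)) • b)
    (hbisect : ‖c‖⁻¹ • c + ‖a‖⁻¹ • a = (2 * Real.cos δ) • (‖b‖⁻¹ • b))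
    (hident : ‖c‖ * Δtm = ‖a‖ * Δtn) :
    Δtn = Δtm / (2 * Real.cos δ * (‖a‖ / ‖b‖) - 1 +
      k * ‖a‖ * Δtm ^ 2 / (m * α * Real.cos δ * ‖b‖ ^ 2 * ‖a‖ ^ 2)) := by
  have hA : (0:ℝ) < ‖a‖ := norm_pos_iff.mpr ha
  have hB : (0:ℝ) < ‖b‖ := norm_pos_iff.mpr hb
  have hC : (0:ℝ) < ‖c‖ := norm_pos_iff.mpr hcne
  have hCval : ‖c‖ = ‖a‖ * Δtn / Δtm := by field_simp; linarith
  have hc2 : c = ‖c‖ • ((2 * Real.cos δ) • (‖b‖⁻¹ • b) - ‖a‖⁻¹ • a) := by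
    have h1 : ‖c‖⁻¹ • c = (2 * Real.cos δ) • (‖b‖⁻¹ • b) - ‖a‖⁻¹ • a :=
      eq_sub_of_add_eq hbisect
    rw [← h1, smul_smul, mul_inv_cancel₀ hC.ne', one_smul]
  rw [hc2] at hKepler
  have hv : (Δtm⁻¹ - Δtn⁻¹ * (‖c‖ * ‖a‖⁻¹)) • a +
      (Δtn⁻¹ * (‖c‖ * (2 * Real.cos δ) * ‖b‖⁻¹) -
        (1 / Δtn + 1 / Δtm - k * Δtm / (α * m * ‖b‖ ^ 2 * ‖a‖ * Real.cos δ))) • b = 0 := by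
    linear_combination (norm := module) hKepler
  have hcoefa : Δtm⁻¹ - Δtn⁻¹ * (‖c‖ * ‖a‖⁻¹) = 0 := by
    rw [hCval]; field_simp; ring
  rw [hcoefa, zero_smul, zero_add, smul_eq_zero] at hv
  have hkey := sub_eq_zero.mp (hv.resolve_right hb)
  rw [hCval] at hkey
  have hD : 2 * Real.cos δ * (‖a‖ / ‖b‖) - 1 +
      k * ‖a‖ * Δtm ^ 2 / (m * α * Real.cos δ * ‖b‖ ^ 2 * ‖a‖ ^ 2) = Δtm / Δtn := by
    field_simp at hkey ⊢
    apply mul_right_cancel₀ (show (Δtn * Δtm) ≠ 0 by positivity)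
    linear_combination (Δtn * Δtm) * hkey
  rw [hD]
  field_simp
end
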